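/- arXiv:2603.24229 — 5 statements merged into one kernel-verified Lean document; each statement's English description precedes it below -/
import Mathlib

section
/- Let N : ℝ → ℝ be differentiable with N(t) < 0 on [a,b], and δ < 0, satisfying N'(t) ≥ δ·N(t)². Then for all t ∈ [a, min(a + 1/(N(a)·δ), b)), one has N(t) ≥ 1/(N(a)⁻¹ − δ(t−a)). -/
open Set

theorem frequency_lower_bound_fast_diffusion
    (a b δ : ℝ) (hab : a < b) (hδ : δ < 0)
    (N N' : ℝ → ℝ)
    (hderiv : ∀ t ∈ Icc a b, HasDerivAt N (N' t) t)
    (hNneg : ∀ t ∈ Icc a b, N t < 0)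
    (hric : ∀ t ∈ Icc a b, δ * (N t) ^ 2 ≤ N' t) :
    ∀ t ∈ Ico a (min (a + 1 / (N a * δ)) b),
      1 / ((N a)⁻¹ - δ * (t - a)) ≤ N t := by
  have ha : a ∈ Icc a b := ⟨le_refl a, hab.le⟩
  have hNa : N a < 0 := hNneg a ha
  -- the auxiliary function g t = (N t)⁻¹ + δ * t
  set g : ℝ → ℝ := fun t => (N t)⁻¹ + δ * t with hg
  have hgderiv : ∀ x ∈ Icc a b, HasDerivAt g (-(N' x) / (N x) ^ 2 + δ) x := by
    intro x hx
    exact ((hderiv x hx).inv (ne_of_lt (hNneg x hx))).add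
      (((hasDerivAt_id x).const_mul δ).congr_deriv (mul_one δ))
  have hanti : AntitoneOn g (Icc a b) := by
    apply antitoneOn_of_deriv_nonpos (convex_Icc a b)
    · exact fun x hx => ((hgderiv x hx).continuousAt).continuousWithinAt
    · intro x hx
      rw [interior_Icc] at hx
      exact ((hgderiv x ⟨hx.1.le, hx.2.le⟩).differentiableAt).differentiableWithinAt
    · intro x hx
      rw [interior_Icc] at hx
      have hx' : x ∈ Icc a b := ⟨hx.1.le, hx.2.le⟩
      rw [(hgderiv x hx').deriv]
      have h2 : (0:ℝ) < (N x) ^ 2 := pow_pos (neg_pos.mpr (hNneg x hx')) 2 |>.trans_eq (by ring)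
      have := hric x hx'
      rw [div_add' _ _ _ (ne_of_gt h2), div_nonpos_iff]
      right
      constructor
      · nlinarith
      · exact h2.le
  intro t ht
  obtain ⟨hat, htlt⟩ := ht
  have htb : t ∈ Icc a b := ⟨hat, le_of_lt (lt_of_lt_of_le htlt (min_le_right _ _))⟩
  have hNt : N t < 0 := hNneg t htb
  have hgle : g t ≤ g a := hanti ha htb hat
  have hkey : (N t)⁻¹ ≤ (N a)⁻¹ - δ * (t - a) := by
    have : (N t)⁻¹ + δ * t ≤ (N a)⁻¹ + δ * a := hgle
    linarith [this]
  -- show the denominator is negative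
  have hNaδ : 0 < N a * δ := mul_pos_of_neg_of_neg hNa hδ
  have htlt' : t - a < 1 / (N a * δ) := by
    have := lt_of_lt_of_le htlt (min_le_left _ _)
    linarith
  have hD : (N a)⁻¹ - δ * (t - a) < 0 := by
    have h1 : δ * (t - a) > δ * (1 / (N a * δ)) := by
      exact mul_lt_mul_of_neg_left htlt' hδ
    have h2 : δ * (1 / (N a * δ)) = (N a)⁻¹ := by
      field_simp
      rw [div_mul_cancel_left₀ (ne_of_lt hδ), one_div]
    linarith
  -- conclude
  have hNtinv : (N t)⁻¹ < 0 := inv_lt_zero.mpr hNt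
  have hmul : N t * (N t)⁻¹ = 1 := mul_inv_cancel₀ (ne_of_lt hNt)
  have h3 : N t * ((N a)⁻¹ - δ * (t - a)) ≤ 1 := by nlinarith
  rw [div_le_iff_of_neg hD]
  linarith [h3]
end

section
/- Let f, g : ℝ → ℝ be differentiable on (a,∞) with g(t) = f'(t) (interpreted pointwise), and suppose G(t) := −δ⁻¹·(d/dt)(I(t)^(−δ/(q+1))) is monotone increasing and nonpositive on (a,∞), where I is positive and differentiable, δ > 0, q > 0. Then for t > a+1, I(t) ≥ (I(a+1)^(−δ/(q+1)) + δ(t−a−1)·(−G(a+1)))^(−(q+1)/δ). In particular, I cannot satisfy I(t) ≤ C(t−a+1)^(−k) for every positive integer k with constants C depending on k, unless I ≡ 0. -/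
open Set

theorem vanishing_order_bound_and_unique_continuation
    (a q δ : ℝ) (hq : 0 < q) (hδ : 0 < δ)
    (I : ℝ → ℝ)
    (hIpos : ∀ t ∈ Ioi a, 0 < I t)
    (hIdiff : ∀ t ∈ Ioi a, DifferentiableAt ℝ I t)
    (G : ℝ → ℝ)
    (hG : ∀ t ∈ Ioi a, G t = -δ⁻¹ * deriv (fun s => I s ^ (-δ / (q + 1))) t)
    (hGmono : MonotoneOn G (Ioi a))
    (hGnonpos : ∀ t ∈ Ioi a, G t ≤ 0) :
    (∀ t, a + 1 < t →
      (I (a + 1) ^ (-δ / (q + 1)) + δ * (t - a - 1) * (-G (a + 1))) ^ (-(q + 1) / δ)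
        ≤ I t) ∧
    ¬ (∀ k : ℕ, 0 < k → ∃ C : ℝ, 0 < C ∧ ∀ t ∈ Ioi a, I t ≤ C * (t - a + 1) ^ (-(k : ℝ))) := by
  have hq1 : (0:ℝ) < q + 1 := by linarith
  have ha1 : a + 1 ∈ Ioi a := mem_Ioi.2 (by linarith)
  set J : ℝ → ℝ := fun s => I s ^ (-δ / (q + 1)) with hJdef
  have hJdiff : ∀ s ∈ Ioi a, DifferentiableAt ℝ J s := fun s hs =>
    (hIdiff s hs).rpow_const (Or.inl (hIpos s hs).ne')
  have hderiv : ∀ s ∈ Ioi a, deriv J s = -δ * G s := by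
    intro s hs
    rw [hG s hs]
    field_simp
  -- main differential inequality
  have key : ∀ t, a + 1 < t →
      J t ≤ J (a + 1) + δ * (t - a - 1) * (-G (a + 1)) := by
    intro t ht
    set Cst : ℝ := -δ * G (a + 1) with hCst
    have hanti : AntitoneOn (fun s => J s - Cst * s) (Icc (a + 1) t) := by
      have hsub : Icc (a + 1) t ⊆ Ioi a := fun x hx => mem_Ioi.2 (by
        have := hx.1; linarith)
      have hdiffOn : DifferentiableOn ℝ (fun s => J s - Cst * s) (Icc (a + 1) t) := by
        intro x hx
        exact (((hJdiff x (hsub hx)).sub ((differentiable_id.const_mul Cst) x)).differentiableWithinAt)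
      apply antitoneOn_of_deriv_nonpos (convex_Icc _ _)
        hdiffOn.continuousOn
        (hdiffOn.mono interior_subset)
      · intro x hx
        rw [interior_Icc] at hx
        have hxa : x ∈ Ioi a := mem_Ioi.2 (by have := hx.1; linarith)
        have hd : HasDerivAt (fun s => J s - Cst * s) (deriv J x - Cst * 1) x :=
          ((hJdiff x hxa).hasDerivAt).sub ((hasDerivAt_id x).const_mul Cst)
        rw [hd.deriv, hderiv x hxa]
        have hmono : G (a + 1) ≤ G x := hGmono ha1 hxa (le_of_lt hx.1)
        nlinarith
    have h1 : (a + 1 : ℝ) ∈ Icc (a + 1) t := ⟨le_refl _, ht.le⟩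
    have h2 : t ∈ Icc (a + 1) t := ⟨ht.le, le_refl _⟩
    have := hanti h1 h2 ht.le
    simp only at this
    nlinarith
  -- Part 1
  have part1 : ∀ t, a + 1 < t →
      (I (a + 1) ^ (-δ / (q + 1)) + δ * (t - a - 1) * (-G (a + 1))) ^ (-(q + 1) / δ)
        ≤ I t := by
    intro t ht
    have hta : t ∈ Ioi a := mem_Ioi.2 (by linarith)
    have hJt : 0 < J t := Real.rpow_pos_of_pos (hIpos t hta) _
    have hexp : -(q + 1) / δ ≤ 0 :=
      le_of_lt (div_neg_of_neg_of_pos (by linarith) hδ)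
    have hmul : (-δ / (q + 1)) * (-(q + 1) / δ) = 1 := by
      field_simp
    have hId : (J t) ^ (-(q + 1) / δ) = I t := by
      rw [hJdef]
      simp only
      rw [← Real.rpow_mul (hIpos t hta).le, hmul, Real.rpow_one]
    calc (I (a + 1) ^ (-δ / (q + 1)) + δ * (t - a - 1) * (-G (a + 1))) ^ (-(q + 1) / δ)
        ≤ (J t) ^ (-(q + 1) / δ) :=
          Real.rpow_le_rpow_of_nonpos hJt (key t ht) hexp
      _ = I t := hId
  refine ⟨part1, ?_⟩
  -- Part 2
  intro H
  set α : ℝ := (q + 1) / δ with hα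
  have hα0 : 0 < α := div_pos hq1 hδ
  set k : ℕ := ⌈α⌉₊ + 1 with hk
  obtain ⟨C, hC, hbd⟩ := H k (Nat.succ_pos _)
  set A : ℝ := I (a + 1) ^ (-δ / (q + 1)) with hA
  have hA0 : 0 < A := Real.rpow_pos_of_pos (hIpos (a + 1) ha1) _
  set B : ℝ := δ * (-G (a + 1)) with hB
  have hB0 : 0 ≤ B := mul_nonneg hδ.le (neg_nonneg.2 (hGnonpos (a + 1) ha1))
  set D : ℝ := C * (A + B) ^ α with hD
  set s : ℝ := max 1 D with hs
  have hs1 : (1:ℝ) ≤ s := le_max_left _ _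
  have hsD : D ≤ s := le_max_right _ _
  set t : ℝ := a + 1 + s with htdef
  have ht : a + 1 < t := by rw [htdef]; linarith
  have hta : t ∈ Ioi a := mem_Ioi.2 (by linarith)
  set y : ℝ := s + 2 with hy
  have hy0 : (0:ℝ) < y := by rw [hy]; linarith
  have hy1 : (1:ℝ) ≤ y := by rw [hy]; linarith
  set x : ℝ := A + B * s with hx
  have hx0 : (0:ℝ) < x := by
    rw [hx]; nlinarith
  -- the lower bound at t, rewritten
  have hlow : x ^ (-α) ≤ I t := by
    have := part1 t ht
    have heq : I (a + 1) ^ (-δ / (q + 1)) + δ * (t - a - 1) * (-G (a + 1)) = x := by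
      rw [hx, hB, ← hA, htdef]; ring
    have heq2 : -(q + 1) / δ = -α := by rw [hα]; ring
    rwa [heq, heq2] at this
  have hup : I t ≤ C * y ^ (-(k:ℝ)) := by
    have := hbd t hta
    have heq : t - a + 1 = y := by rw [htdef, hy]; ring
    rwa [heq] at this
  have h1 : x ^ (-α) ≤ C * y ^ (-(k:ℝ)) := le_trans hlow hup
  have hxp : (0:ℝ) < x ^ α := Real.rpow_pos_of_pos hx0 α
  have hyp : (0:ℝ) < y ^ (k:ℝ) := Real.rpow_pos_of_pos hy0 _
  rw [Real.rpow_neg hx0.le, Real.rpow_neg hy0.le] at h1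
  have h2 : y ^ (k:ℝ) ≤ C * x ^ α := by
    calc y ^ (k:ℝ) = (x ^ α * (x ^ α)⁻¹) * y ^ (k:ℝ) := by
          rw [mul_inv_cancel₀ hxp.ne', one_mul]
      _ = (x ^ α * y ^ (k:ℝ)) * (x ^ α)⁻¹ := by ring
      _ ≤ (x ^ α * y ^ (k:ℝ)) * (C * (y ^ (k:ℝ))⁻¹) :=
          mul_le_mul_of_nonneg_left h1 (by positivity)
      _ = C * x ^ α * (y ^ (k:ℝ) * (y ^ (k:ℝ))⁻¹) := by ring
      _ = C * x ^ α := by rw [mul_inv_cancel₀ hyp.ne', mul_one]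
  -- bound x^α by (A+B)^α * y^α
  have hxle : x ≤ (A + B) * y := by
    rw [hx, hy]; nlinarith
  have h3 : x ^ α ≤ (A + B) ^ α * y ^ α := by
    calc x ^ α ≤ ((A + B) * y) ^ α := Real.rpow_le_rpow hx0.le hxle hα0.le
      _ = (A + B) ^ α * y ^ α := Real.mul_rpow (by linarith) hy0.le
  have h4 : y ^ (k:ℝ) ≤ D * y ^ α := by
    calc y ^ (k:ℝ) ≤ C * ((A + B) ^ α * y ^ α) := by
          exact le_trans h2 (mul_le_mul_of_nonneg_left h3 hC.le)
      _ = D * y ^ α := by rw [hD]; ring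
  -- but y^k ≥ y^α * y
  have hkα : α + 1 ≤ (k:ℝ) := by
    rw [hk]
    push_cast
    have := Nat.le_ceil α
    linarith
  have h5 : y ^ α * y ≤ y ^ (k:ℝ) := by
    calc y ^ α * y = y ^ (α + 1) := by
          rw [Real.rpow_add hy0, Real.rpow_one]
      _ ≤ y ^ (k:ℝ) := Real.rpow_le_rpow_of_exponent_le hy1 hkα
  have hyα : (0:ℝ) < y ^ α := Real.rpow_pos_of_pos hy0 _
  have h6 : y ≤ D := by
    have h7 : y ^ α * y ≤ y ^ α * D := by
      calc y ^ α * y ≤ y ^ (k:ℝ) := h5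
        _ ≤ D * y ^ α := h4
        _ = y ^ α * D := by ring
    exact le_of_mul_le_mul_left h7 hyα
  rw [hy] at h6
  linarith
end

section
/- Let N : ℝ → ℝ be differentiable on (−∞, 0) with N(t) ≤ 0, and suppose N'(t) ≥ δ·N(t)² with δ > 0, and N is monotone increasing. Then N(t) = 0 for all t < 0. -/
open Set

theorem ancient_frequency_vanishes
    (δ : ℝ) (hδ : 0 < δ)
    (N N' : ℝ → ℝ)
    (hderiv : ∀ t ∈ Iio (0 : ℝ), HasDerivAt N (N' t) t)
    (hNnonpos : ∀ t ∈ Iio (0 : ℝ), N t ≤ 0)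
    (hric : ∀ t ∈ Iio (0 : ℝ), δ * (N t) ^ 2 ≤ N' t)
    (hmono : MonotoneOn N (Iio (0 : ℝ))) :
    ∀ t ∈ Iio (0 : ℝ), N t = 0 := by
  intro t₀ ht₀
  by_contra hne
  have hlt : N t₀ < 0 := lt_of_le_of_ne (hNnonpos t₀ ht₀) hne
  have hNneg : ∀ s ≤ t₀, N s < 0 := by
    intro s hs
    have hsmem : s ∈ Iio (0:ℝ) := lt_of_le_of_lt hs ht₀
    exact lt_of_le_of_lt (hmono hsmem ht₀ hs) hlt
  set f : ℝ → ℝ := fun t => -(N t)⁻¹ with hf_def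
  have hft₀pos : 0 < f t₀ := by
    have := inv_neg''.mpr hlt
    simp only [hf_def]
    linarith
  set s : ℝ := t₀ - (f t₀ + 1) / δ with hs_def
  have hslt : s < t₀ := by
    have : 0 < (f t₀ + 1) / δ := div_pos (by linarith) hδ
    simp only [hs_def]; linarith
  set g : ℝ → ℝ := fun t => f t - δ * t with hg_def
  have hg : ∀ t ∈ Icc s t₀, HasDerivAt g (N' t / (N t) ^ 2 - δ) t := by
    intro t ht
    have hNt : N t < 0 := hNneg t ht.2
    have h1 : HasDerivAt (fun y => (N y)⁻¹) (-N' t / (N t) ^ 2) t :=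
      (hderiv t (lt_of_le_of_lt ht.2 ht₀)).inv hNt.ne
    have h2 : HasDerivAt f (N' t / (N t) ^ 2) t := by
      have := h1.neg
      refine this.congr_deriv ?_
      ring
    exact (h2.sub ((hasDerivAt_id t).const_mul δ)).congr_deriv (by ring)
  have hg'nonneg : ∀ t ∈ Icc s t₀, 0 ≤ N' t / (N t) ^ 2 - δ := by
    intro t ht
    have hNt : N t < 0 := hNneg t ht.2
    have hsq : (0:ℝ) < (N t) ^ 2 := by nlinarith
    have hr := hric t (lt_of_le_of_lt ht.2 ht₀)
    have : δ ≤ N' t / (N t) ^ 2 := (le_div_iff₀ hsq).mpr (by linarith)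
    linarith
  have hmonog : MonotoneOn g (Icc s t₀) := by
    apply monotoneOn_of_deriv_nonneg (convex_Icc s t₀)
    · exact fun t ht => (hg t ht).continuousAt.continuousWithinAt
    · intro t ht
      rw [interior_Icc] at ht
      exact (hg t (Ioo_subset_Icc_self ht)).differentiableAt.differentiableWithinAt
    · intro t ht
      rw [interior_Icc] at ht
      rw [(hg t (Ioo_subset_Icc_self ht)).deriv]
      exact hg'nonneg t (Ioo_subset_Icc_self ht)
  have hgs : g s ≤ g t₀ :=
    hmonog (left_mem_Icc.mpr hslt.le) (right_mem_Icc.mpr hslt.le) hslt.le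
  have hfspos : 0 < f s := by
    have := inv_neg''.mpr (hNneg s hslt.le)
    simp only [hf_def]; linarith
  have hδts : δ * (t₀ - s) = f t₀ + 1 := by
    simp only [hs_def]
    field_simp
    ring
  have : f s ≤ -1 := by
    have h1 : f s - δ * s ≤ f t₀ - δ * t₀ := hgs
    nlinarith
  linarith
end

section
/- Let N : ℝ → ℝ be differentiable, nonpositive, and monotone increasing on (−∞, 0), and let I : (−∞,0) → ℝ be positive and differentiable with (d/dt) log I(t) = (q+1)·N(t) for some q > 0. If there exist C, d > 0 with I(t) ≤ C(1+|t|)^d for all t < 0, then N(t) = 0 for all t < 0. -/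
open Set Real

theorem ancient_frequency_vanishes_polynomial_growth
    (q : ℝ) (hq : 0 < q)
    (N : ℝ → ℝ)
    (hNdiff : ∀ t ∈ Iio (0 : ℝ), DifferentiableAt ℝ N t)
    (hNnonpos : ∀ t ∈ Iio (0 : ℝ), N t ≤ 0)
    (hNmono : MonotoneOn N (Iio (0 : ℝ)))
    (I : ℝ → ℝ)
    (hIpos : ∀ t ∈ Iio (0 : ℝ), 0 < I t)
    (hlog : ∀ t ∈ Iio (0 : ℝ),
      HasDerivAt (fun s => Real.log (I s)) ((q + 1) * N t) t)
    (C d : ℝ) (hC : 0 < C) (hd : 0 < d)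
    (hgrowth : ∀ t ∈ Iio (0 : ℝ), I t ≤ C * (1 + |t|) ^ d) :
    ∀ t ∈ Iio (0 : ℝ), N t = 0 := by
  intro t₀ ht₀
  by_contra hne
  have hN0 : N t₀ < 0 := lt_of_le_of_ne (hNnonpos t₀ ht₀) hne
  set a : ℝ := -((q + 1) * N t₀) with ha_def
  have ha : 0 < a := by nlinarith
  set f : ℝ → ℝ := fun s => Real.log (I s) with hf_def
  -- key lower bound from the mean value theorem
  have key : ∀ t < t₀, f t₀ + a * (t₀ - t) ≤ f t := by
    intro t ht
    have hsub : Icc t t₀ ⊆ Iio (0 : ℝ) := fun x hx => lt_of_le_of_lt hx.2 ht₀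
    have hcont : ContinuousOn f (Icc t t₀) := fun x hx =>
      ((hlog x (hsub hx)).continuousAt).continuousWithinAt
    have hderiv : ∀ x ∈ Ioo t t₀, HasDerivAt f ((q + 1) * N x) x := fun x hx =>
      hlog x (lt_trans hx.2 ht₀)
    obtain ⟨c, hc, hceq⟩ :=
      exists_hasDerivAt_eq_slope f (fun x => (q + 1) * N x) ht hcont hderiv
    have hc0 : c ∈ Iio (0 : ℝ) := lt_trans hc.2 ht₀
    have hNc : N c ≤ N t₀ := hNmono hc0 ht₀ (le_of_lt hc.2)
    have h1 : (f t₀ - f t) / (t₀ - t) ≤ -a := by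
      rw [← hceq]; nlinarith
    have ht' : 0 < t₀ - t := by linarith
    have h2 := (div_le_iff₀ ht').mp h1
    nlinarith
  -- upper bound from polynomial growth
  have upper : ∀ t < t₀, f t ≤ Real.log C + d * Real.log (1 - t) := by
    intro t ht
    have ht0 : t ∈ Iio (0 : ℝ) := lt_trans ht ht₀
    have ht0' : t < 0 := ht0
    have h1t : (0 : ℝ) < 1 - t := by linarith
    have habs : |t| = -t := abs_of_neg ht0
    have hle : I t ≤ C * (1 - t) ^ d := by
      have := hgrowth t ht0
      rwa [habs, show (1 : ℝ) + -t = 1 - t by ring] at this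
    have hlog1 : f t ≤ Real.log (C * (1 - t) ^ d) :=
      Real.log_le_log (hIpos t ht0) hle
    have hCpow : Real.log (C * (1 - t) ^ d) = Real.log C + d * Real.log (1 - t) := by
      rw [Real.log_mul (ne_of_gt hC) (ne_of_gt (Real.rpow_pos_of_pos h1t d)),
        Real.log_rpow h1t]
    linarith [hlog1, hCpow.le, hCpow.ge]
  -- bound the log by a linear function with slope a/(2d)
  have hd2 : (0 : ℝ) < a / (2 * d) := by positivity
  have logbound : ∀ t < t₀, Real.log (1 - t) ≤ a / (2 * d) * (1 - t) - 1 - Real.log (a / (2 * d)) := by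
    intro t ht
    have ht0 : t < 0 := lt_trans ht ht₀
    have h1t : (0 : ℝ) < 1 - t := by linarith
    have hx : (0 : ℝ) < a / (2 * d) * (1 - t) := by positivity
    have h1 := Real.log_le_sub_one_of_pos hx
    rw [Real.log_mul (ne_of_gt hd2) (ne_of_gt h1t)] at h1
    linarith
  -- derive a contradiction by choosing t very negative
  clear_value a f
  obtain ⟨K, hK⟩ : ∃ K : ℝ,
      K = Real.log C + a / 2 - d - d * Real.log (a / (2 * d)) - f t₀ - a * t₀ := ⟨_, rfl⟩
  obtain ⟨t, htlt, htB⟩ : ∃ t, t < t₀ ∧ t < -(2 * K / a) :=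
    ⟨min t₀ (-(2 * K / a)) - 1, by
      constructor
      · linarith [min_le_left t₀ (-(2 * K / a))]
      · linarith [min_le_right t₀ (-(2 * K / a))]⟩
  have h1 := key t htlt
  have h2 := upper t htlt
  have h3 := logbound t htlt
  have h3' : d * Real.log (1 - t) ≤ a / 2 * (1 - t) - d - d * Real.log (a / (2 * d)) := by
    have hm := mul_le_mul_of_nonneg_left h3 hd.le
    have he : d * (a / (2 * d) * (1 - t)) = a / 2 * (1 - t) := by field_simp
    nlinarith
  have hmul : a / 2 * -(2 * K / a) = -K := by field_simp
  have hlt := mul_lt_mul_of_pos_left htB (by positivity : (0 : ℝ) < a / 2)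
  rw [hmul] at hlt
  linarith
end

section
/- Let I, D : [a,b] → ℝ with I > 0 differentiable, D ≤ 0, I'(t) = (q+1)·D(t), and suppose D'·I − ((pq)/(q+1))·D·I' ≥ 0 pointwise (monotonicity of the generalized frequency numerator), where p > 1, q > 0 and δ := q(p−1)−1 ≥ 0. Then N := D/I satisfies N'(t) ≥ δ·N(t)², and N is monotone increasing. -/
open Set

theorem frequency_riccati_from_generalized_monotonicity
    (a b p q δ : ℝ) (hab : a < b) (hp : 1 < p) (hq : 0 < q)
    (hδdef : δ = q * (p - 1) - 1) (hδ : 0 ≤ δ)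
    (I I' D D' : ℝ → ℝ)
    (hIpos : ∀ t ∈ Icc a b, 0 < I t)
    (hIderiv : ∀ t ∈ Icc a b, HasDerivAt I (I' t) t)
    (hDderiv : ∀ t ∈ Icc a b, HasDerivAt D (D' t) t)
    (hDnonpos : ∀ t ∈ Icc a b, D t ≤ 0)
    (hI' : ∀ t ∈ Icc a b, I' t = (q + 1) * D t)
    (hNG : ∀ t ∈ Icc a b, 0 ≤ D' t * I t - p * q / (q + 1) * D t * I' t) :
    (∀ t ∈ Icc a b, δ * (D t / I t) ^ 2 ≤ deriv (fun s => D s / I s) t) ∧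
    MonotoneOn (fun t => D t / I t) (Icc a b) := by
  have hq1 : (0:ℝ) < q + 1 := by linarith
  have key : ∀ t ∈ Icc a b, δ * (D t / I t) ^ 2 ≤ deriv (fun s => D s / I s) t := by
    intro t ht
    have hI := hIpos t ht
    have hd : HasDerivAt (fun s => D s / I s)
        ((D' t * I t - D t * I' t) / I t ^ 2) t :=
      (hDderiv t ht).div (hIderiv t ht) hI.ne'
    rw [hd.deriv]
    have hng := hNG t ht
    rw [hI' t ht] at hng
    -- hng : 0 ≤ D' t * I t - p*q/(q+1) * D t * ((q+1)*D t)
    have h1 : p * q * D t ^ 2 ≤ D' t * I t := by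
      have : p * q / (q + 1) * D t * ((q + 1) * D t) = p * q * D t ^ 2 := by
        field_simp
      nlinarith [hng]
    have h2 : D' t * I t - D t * I' t = D' t * I t - (q + 1) * D t ^ 2 := by
      rw [hI' t ht]; ring
    rw [h2, div_pow, ← mul_div_assoc, div_le_div_iff₀ (by positivity) (by positivity)]
    have hδeq : δ + (q + 1) = p * q := by rw [hδdef]; ring
    have h3 : δ * D t ^ 2 ≤ D' t * I t - (q + 1) * D t ^ 2 := by
      nlinarith [h1, sq_nonneg (D t), hδeq]
    exact mul_le_mul_of_nonneg_right h3 (sq_nonneg (I t))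
  refine ⟨key, ?_⟩
  have hderiv : ∀ t ∈ Icc a b, HasDerivAt (fun s => D s / I s)
      ((D' t * I t - D t * I' t) / I t ^ 2) t := fun t ht =>
    (hDderiv t ht).div (hIderiv t ht) (hIpos t ht).ne'
  apply monotoneOn_of_deriv_nonneg (convex_Icc a b)
  · exact fun t ht => (hderiv t ht).continuousAt.continuousWithinAt
  · intro t ht
    rw [interior_Icc] at ht
    exact (hderiv t (Ioo_subset_Icc_self ht)).differentiableAt.differentiableWithinAt
  · intro t ht
    rw [interior_Icc] at ht
    have ht' := Ioo_subset_Icc_self ht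
    calc (0:ℝ) ≤ δ * (D t / I t) ^ 2 := by positivity
      _ ≤ deriv (fun s => D s / I s) t := key t ht'
end
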